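/- Let (V, ⟨·,·⟩) be a finite-dimensional real inner product space and let S be a set of endomorphisms of V that pairwise commute and are each skew-adjoint (⟨T u, v⟩ = −⟨u, T v⟩ for all u, v ∈ V, T ∈ S). Then there exists a direct sum decomposition V = V₀ ⊕ V₁ ⊕ ⋯ ⊕ V_s into subspaces each invariant under every T ∈ S, such that T(V₀) = 0 for every T ∈ S and dim V_i = 2 for every i = 1, …, s. -/

import Mathlib

open RealInnerProductSpace

section Aux

variable {V : Type*} [NormedAddCommGroup V] [InnerProductSpace ℝ V] [FiniteDimensional ℝ V]

/-- On a minimal `S`-invariant subspace, a symmetric operator commuting with `S` and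
preserving the subspace acts as a scalar. -/
private lemma stmt14_scalar (S : Set (V →ₗ[ℝ] V))
    (W : Submodule ℝ V) (hWbot : W ≠ ⊥)
    (hWinv : ∀ T ∈ S, ∀ v ∈ W, T v ∈ W)
    (hmin : ∀ W' : Submodule ℝ V, W' ≤ W → W' ≠ ⊥ →
      (∀ T ∈ S, ∀ v ∈ W', T v ∈ W') → W' = W)
    (A : V →ₗ[ℝ] V) (hsym : ∀ u v : V, ⟪A u, v⟫ = ⟪u, A v⟫)
    (hAcomm : ∀ T ∈ S, A ∘ₗ T = T ∘ₗ A)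
    (hAW : ∀ v ∈ W, A v ∈ W) :
    ∃ μ : ℝ, ∀ v ∈ W, A v = μ • v := by
  haveI : Nontrivial W := Submodule.nontrivial_iff_ne_bot.mpr hWbot
  set A' : W →ₗ[ℝ] W := A.restrict hAW with hA'
  have hA'sym : A'.IsSymmetric := by
    intro x y
    rw [Submodule.coe_inner, Submodule.coe_inner, LinearMap.restrict_coe_apply,
      LinearMap.restrict_coe_apply]
    exact hsym _ _
  have hexists : ∃ μ : ℝ, Module.End.eigenspace A' μ ≠ ⊥ := by
    by_contra h
    push_neg at h
    have := hA'sym.subsingleton_of_no_eigenvalue_finiteDimensional (by simpa using h)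
    exact false_of_nontrivial_of_subsingleton W
  obtain ⟨μ, hμ⟩ := hexists
  obtain ⟨w, hwmem, hwne⟩ := Submodule.exists_mem_ne_zero_of_ne_bot hμ
  have hw : A w.1 = μ • w.1 := by
    have := Module.End.mem_eigenspace_iff.mp hwmem
    have h2 := congrArg (Subtype.val) this
    rw [LinearMap.restrict_coe_apply] at h2
    simpa using h2
  set E : Submodule ℝ V := (LinearMap.ker (A - μ • LinearMap.id)) ⊓ W with hE
  have hmemE : ∀ v : V, v ∈ E ↔ (A v = μ • v ∧ v ∈ W) := by
    intro v
    simp only [hE, Submodule.mem_inf, LinearMap.mem_ker, LinearMap.sub_apply,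
      LinearMap.smul_apply, LinearMap.id_apply, sub_eq_zero]
  have hEW : E ≤ W := inf_le_right
  have hEbot : E ≠ ⊥ := by
    intro h
    apply hwne
    have hmem : (w : V) ∈ E := (hmemE _).mpr ⟨hw, w.2⟩
    rw [h, Submodule.mem_bot] at hmem
    exact Subtype.ext hmem
  have hEinv : ∀ T ∈ S, ∀ v ∈ E, T v ∈ E := by
    intro T hT v hv
    obtain ⟨hv1, hv2⟩ := (hmemE v).mp hv
    refine (hmemE _).mpr ⟨?_, ?_⟩
    · have hc : A (T v) = T (A v) := DFunLike.congr_fun (hAcomm T hT) v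
      rw [hc, hv1, map_smul]
    · exact hWinv T hT v hv2
  have hEeq : E = W := hmin E hEW hEbot hEinv
  refine ⟨μ, fun v hv => ?_⟩
  exact ((hmemE v).mp (hEeq ▸ hv)).1

/-- Core: any nonzero invariant subspace contains a nonzero invariant subspace on which
either all of `S` vanishes, or which has dimension 2. -/
private lemma stmt14_core (S : Set (V →ₗ[ℝ] V))
    (hcomm : ∀ T ∈ S, ∀ T' ∈ S, T ∘ₗ T' = T' ∘ₗ T)
    (hskew : ∀ T ∈ S, ∀ u v : V, ⟪T u, v⟫ = -⟪u, T v⟫)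
    (U : Submodule ℝ V) (hU : U ≠ ⊥)
    (hUinv : ∀ T ∈ S, ∀ v ∈ U, T v ∈ U) :
    ∃ W : Submodule ℝ V, W ≤ U ∧ W ≠ ⊥ ∧ (∀ T ∈ S, ∀ v ∈ W, T v ∈ W) ∧
      ((∀ T ∈ S, ∀ v ∈ W, T v = 0) ∨ Module.finrank ℝ W = 2) := by
  classical
  set N : Set ℕ := {k | ∃ W : Submodule ℝ V, W ≤ U ∧ W ≠ ⊥ ∧
    (∀ T ∈ S, ∀ v ∈ W, T v ∈ W) ∧ Module.finrank ℝ W = k} with hN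
  have hNne : N.Nonempty := ⟨Module.finrank ℝ U, U, le_rfl, hU, hUinv, rfl⟩
  obtain ⟨W, hWU, hWbot, hWinv, hWrank⟩ := Nat.sInf_mem hNne
  have hmin : ∀ W' : Submodule ℝ V, W' ≤ W → W' ≠ ⊥ →
      (∀ T ∈ S, ∀ v ∈ W', T v ∈ W') → W' = W := by
    intro W' h1 h2 h3
    have hmem : Module.finrank ℝ W' ∈ N := ⟨W', h1.trans hWU, h2, h3, rfl⟩
    exact Submodule.eq_of_le_of_finrank_le h1 (hWrank ▸ Nat.sInf_le hmem)
  by_cases hker : ∀ T ∈ S, ∀ v ∈ W, T v = 0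
  · exact ⟨W, hWU, hWbot, hWinv, Or.inl hker⟩
  push_neg at hker
  obtain ⟨T₀, hT₀S, v₀, hv₀W, hv₀⟩ := hker
  -- squares of skew operators commuting with S act as scalars on W
  have sq : ∀ B : V →ₗ[ℝ] V, (∀ u v : V, ⟪B u, v⟫ = -⟪u, B v⟫) →
      (∀ T ∈ S, B ∘ₗ T = T ∘ₗ B) → (∀ v ∈ W, B v ∈ W) →
      ∃ μ : ℝ, ∀ v ∈ W, B (B v) = μ • v := by
    intro B hB hBc hBW
    obtain ⟨μ, hμ⟩ := stmt14_scalar S W hWbot hWinv hmin (B ∘ₗ B)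
      (fun u v => by
        have h1 : ⟪B (B u), v⟫ = -⟪B u, B v⟫ := hB _ _
        have h2 : ⟪B u, B v⟫ = -⟪u, B (B v)⟫ := hB _ _
        simp only [LinearMap.comp_apply]
        rw [h1, h2]; ring)
      (fun T hT => by
        rw [LinearMap.comp_assoc, hBc T hT, ← LinearMap.comp_assoc, hBc T hT,
          LinearMap.comp_assoc])
      (fun v hv => hBW _ (hBW _ hv))
    exact ⟨μ, fun v hv => hμ v hv⟩
  obtain ⟨μ₀, hμ₀⟩ := sq T₀ (hskew T₀ hT₀S) (hcomm T₀ hT₀S) (hWinv T₀ hT₀S)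
  have hμ₀ne : μ₀ ≠ 0 := by
    intro h
    apply hv₀
    have h1 : ⟪T₀ v₀, T₀ v₀⟫ = -⟪v₀, T₀ (T₀ v₀)⟫ := hskew T₀ hT₀S v₀ (T₀ v₀)
    rw [hμ₀ v₀ hv₀W, h, zero_smul, inner_zero_right, neg_zero] at h1
    exact inner_self_eq_zero.mp h1
  -- every element of S acts on W as a multiple of T₀
  have hscal : ∀ T ∈ S, ∃ a : ℝ, ∀ v ∈ W, T v = a • T₀ v := by
    intro T hT
    obtain ⟨μT, hμT⟩ := sq T (hskew T hT) (hcomm T hT) (hWinv T hT)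
    obtain ⟨ν, hν⟩ := sq (T₀ + T)
      (fun u v => by
        simp only [LinearMap.add_apply, inner_add_left, inner_add_right,
          hskew T₀ hT₀S u v, hskew T hT u v]
        ring)
      (fun T' hT' => by
        rw [LinearMap.add_comp, LinearMap.comp_add, hcomm T₀ hT₀S T' hT',
          hcomm T hT T' hT'])
      (fun v hv => W.add_mem (hWinv T₀ hT₀S v hv) (hWinv T hT v hv))
    have hc : ∀ v ∈ W, T₀ (T v) = ((ν - μ₀ - μT) / 2) • v := by
      intro v hv
      have h1 := hν v hv
      have h2 : T₀ (T v) = T (T₀ v) := DFunLike.congr_fun (hcomm T₀ hT₀S T hT) v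
      simp only [LinearMap.add_apply, map_add] at h1
      rw [hμ₀ v hv, hμT v hv, ← h2] at h1
      have h3 : T₀ (T v) + T₀ (T v) = ν • v - μ₀ • v - μT • v := by
        rw [eq_sub_iff_add_eq, eq_sub_iff_add_eq, ← h1]; abel
      have h4 : (2 : ℝ) • T₀ (T v) = (ν - μ₀ - μT) • v := by
        rw [two_smul, h3, sub_smul, sub_smul]
      calc T₀ (T v) = (2 : ℝ)⁻¹ • ((2 : ℝ) • T₀ (T v)) := by
            rw [smul_smul]; norm_num
        _ = (2 : ℝ)⁻¹ • ((ν - μ₀ - μT) • v) := by rw [h4]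
        _ = ((ν - μ₀ - μT) / 2) • v := by rw [smul_smul]; congr 1; ring
    refine ⟨(ν - μ₀ - μT) / 2 / μ₀, fun v hv => ?_⟩
    have h5 : T₀ (T₀ (T v)) = μ₀ • T v := hμ₀ (T v) (hWinv T hT v hv)
    have h6 : T₀ (T₀ (T v)) = ((ν - μ₀ - μT) / 2) • T₀ v := by
      rw [hc v hv, map_smul]
    have h7 : μ₀ • T v = ((ν - μ₀ - μT) / 2) • T₀ v := by rw [← h5, h6]
    have h8 := congrArg (fun x => (μ₀⁻¹ : ℝ) • x) h7
    simp only [smul_smul, inv_mul_cancel₀ hμ₀ne, one_smul] at h8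
    rw [h8]
    congr 1
    ring
  -- the span of v₀ and T₀ v₀ is invariant, hence equals W
  set W' : Submodule ℝ V := Submodule.span ℝ {v₀, T₀ v₀} with hW'
  have hv₀W' : v₀ ∈ W' := Submodule.subset_span (Set.mem_insert _ _)
  have hTv₀W' : T₀ v₀ ∈ W' := Submodule.subset_span (Set.mem_insert_of_mem _ rfl)
  have hW'W : W' ≤ W := by
    rw [hW', Submodule.span_le]
    rintro x (rfl | rfl)
    · exact hv₀W
    · exact hWinv T₀ hT₀S v₀ hv₀W
  have hW'inv : ∀ T ∈ S, ∀ v ∈ W', T v ∈ W' := by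
    intro T hT v hv
    obtain ⟨a, ha⟩ := hscal T hT
    induction hv using Submodule.span_induction with
    | mem x hx =>
      rcases hx with h | h
      · rw [h, ha v₀ hv₀W]
        exact W'.smul_mem a hTv₀W'
      · rw [Set.mem_singleton_iff] at h
        rw [h, ha (T₀ v₀) (hWinv T₀ hT₀S v₀ hv₀W), hμ₀ v₀ hv₀W]
        exact W'.smul_mem a (W'.smul_mem μ₀ hv₀W')
    | zero => simp
    | add x y _ _ hx hy => rw [map_add]; exact W'.add_mem hx hy
    | smul c x _ hx => rw [map_smul]; exact W'.smul_mem c hx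
  have hv₀ne : v₀ ≠ 0 := fun h => hv₀ (by rw [h, map_zero])
  have hW'bot : W' ≠ ⊥ := by
    intro h
    exact hv₀ne (Submodule.mem_bot ℝ |>.mp (h ▸ hv₀W'))
  have hW'eq : W' = W := hmin W' hW'W hW'bot hW'inv
  -- dimension count
  have horth : ⟪v₀, T₀ v₀⟫ = 0 := by
    have h1 : ⟪T₀ v₀, v₀⟫ = -⟪v₀, T₀ v₀⟫ := hskew T₀ hT₀S v₀ v₀
    rw [real_inner_comm] at h1
    linarith
  have horth' : ⟪T₀ v₀, v₀⟫ = 0 := by rw [real_inner_comm]; exact horth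
  have hli : LinearIndependent ℝ ![v₀, T₀ v₀] := by
    rw [LinearIndependent.pair_iff]
    intro a b hab
    constructor
    · have := congrArg (fun x => ⟪x, v₀⟫) hab
      simp only [inner_add_left, real_inner_smul_left, inner_zero_left,
        horth', mul_zero, add_zero] at this
      have hne : ⟪v₀, v₀⟫ ≠ 0 := fun h => hv₀ne (inner_self_eq_zero.mp h)
      exact (mul_eq_zero.mp this).resolve_right hne
    · have := congrArg (fun x => ⟪x, T₀ v₀⟫) hab
      simp only [inner_add_left, real_inner_smul_left, inner_zero_left,
        horth, mul_zero, zero_add] at this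
      have hne : ⟪T₀ v₀, T₀ v₀⟫ ≠ 0 := fun h => hv₀ (inner_self_eq_zero.mp h)
      exact (mul_eq_zero.mp this).resolve_right hne
  have hrank : Module.finrank ℝ W = 2 := by
    rw [← hW'eq, hW']
    have hset : ({v₀, T₀ v₀} : Set V) = Set.range ![v₀, T₀ v₀] :=
      (Matrix.range_cons_cons_empty v₀ (T₀ v₀) ![]).symm
    rw [hset, finrank_span_eq_card hli]
    simp
  exact ⟨W, hWU, hWbot, hWinv, Or.inr hrank⟩


private lemma stmt14_iSup_cons {m : ℕ} (A : Submodule ℝ V) (C : Fin m → Submodule ℝ V) :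
    (⨆ i, Fin.cons A C i) = A ⊔ ⨆ i, C i := by
  apply le_antisymm
  · apply iSup_le
    intro i
    induction i using Fin.cases with
    | zero => rw [Fin.cons_zero]; exact le_sup_left
    | succ j => rw [Fin.cons_succ]; exact (le_iSup C j).trans le_sup_right
  · apply sup_le
    · exact le_iSup_of_le 0 (by rw [Fin.cons_zero])
    · exact iSup_le fun j => le_iSup_of_le j.succ (by rw [Fin.cons_succ])

private lemma stmt14_aux (S : Set (V →ₗ[ℝ] V))
    (hcomm : ∀ T ∈ S, ∀ T' ∈ S, T ∘ₗ T' = T' ∘ₗ T)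
    (hskew : ∀ T ∈ S, ∀ u v : V, ⟪T u, v⟫ = -⟪u, T v⟫) :
    ∀ (n : ℕ) (U : Submodule ℝ V), Module.finrank ℝ U ≤ n →
      (∀ T ∈ S, ∀ v ∈ U, T v ∈ U) →
    ∃ (W₀ : Submodule ℝ V) (m : ℕ) (C : Fin m → Submodule ℝ V),
      (W₀ ⊔ ⨆ i, C i) = U ∧
      (∀ i, ∀ v ∈ W₀, ∀ w ∈ C i, ⟪v, w⟫ = 0) ∧
      (∀ i j, i ≠ j → ∀ v ∈ C i, ∀ w ∈ C j, ⟪v, w⟫ = 0) ∧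
      (∀ T ∈ S, ∀ v ∈ W₀, T v = 0) ∧
      (∀ T ∈ S, ∀ i, ∀ v ∈ C i, T v ∈ C i) ∧
      (∀ i, Module.finrank ℝ (C i) = 2) := by
  intro n
  induction n with
  | zero =>
    intro U hn _
    have hUbot : U = ⊥ := by
      have : Module.finrank ℝ U = 0 := Nat.le_zero.mp hn
      exact Submodule.finrank_eq_zero.mp this
    refine ⟨⊥, 0, Fin.elim0, ?_, fun i => i.elim0, fun i => i.elim0,
      ?_, fun T _ i => i.elim0, fun i => i.elim0⟩
    · rw [hUbot]; simp
    · intro T _ v hv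
      rw [Submodule.mem_bot] at hv
      rw [hv, map_zero]
  | succ n ih =>
    intro U hn hUinv
    by_cases hUbot : U = ⊥
    · refine ⟨⊥, 0, Fin.elim0, ?_, fun i => i.elim0, fun i => i.elim0,
        ?_, fun T _ i => i.elim0, fun i => i.elim0⟩
      · rw [hUbot]; simp
      · intro T _ v hv
        rw [Submodule.mem_bot] at hv
        rw [hv, map_zero]
    obtain ⟨W, hWU, hWbot, hWinv, hWalt⟩ := stmt14_core S hcomm hskew U hUbot hUinv
    set U' : Submodule ℝ V := Wᗮ ⊓ U with hU'
    have hWU' : ∀ v ∈ W, ∀ w ∈ U', ⟪v, w⟫ = 0 := by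
      intro v hv w hw
      exact hw.1 v hv
    have hU'inv : ∀ T ∈ S, ∀ v ∈ U', T v ∈ U' := by
      intro T hT v hv
      refine ⟨?_, hUinv T hT v hv.2⟩
      intro u hu
      have h1 : ⟪T u, v⟫ = -⟪u, T v⟫ := hskew T hT u v
      have h2 : ⟪T u, v⟫ = 0 := hv.1 (T u) (hWinv T hT u hu)
      linarith
    have hU'U : U' ≤ U := inf_le_right
    have hU'ne : U' ≠ U := by
      intro h
      obtain ⟨w, hwW, hwne⟩ := Submodule.exists_mem_ne_zero_of_ne_bot hWbot
      have hwU' : w ∈ U' := h ▸ hWU hwW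
      exact hwne (inner_self_eq_zero.mp (hwU'.1 w hwW))
    have hU'lt : Module.finrank ℝ U' < Module.finrank ℝ U :=
      Submodule.finrank_lt_finrank_of_lt (lt_of_le_of_ne hU'U hU'ne)
    have hsupWU' : W ⊔ U' = U := Submodule.sup_orthogonal_inf_of_hasOrthogonalProjection hWU
    obtain ⟨W₀, m, C, hsup, horth₁, horth₂, hker, hCinv, hCrank⟩ :=
      ih U' (by omega) hU'inv
    have hW₀U' : W₀ ≤ U' := le_sup_left.trans hsup.le
    have hCU' : ∀ i, C i ≤ U' := fun i =>
      ((le_iSup C i).trans le_sup_right).trans hsup.le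
    rcases hWalt with hWker | hWrank
    · -- merge W into W₀
      refine ⟨W ⊔ W₀, m, C, ?_, ?_, horth₂, ?_, hCinv, hCrank⟩
      · rw [sup_assoc, hsup, hsupWU']
      · intro i v hv w hw
        obtain ⟨a, ha, b, hb, rfl⟩ := Submodule.mem_sup.mp hv
        rw [inner_add_left, hWU' a ha w (hCU' i hw), horth₁ i b hb w hw, add_zero]
      · intro T hT v hv
        obtain ⟨a, ha, b, hb, rfl⟩ := Submodule.mem_sup.mp hv
        rw [map_add, hWker T hT a ha, hker T hT b hb, add_zero]
    · -- add W as a new 2-dimensional block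
      refine ⟨W₀, m + 1, Fin.cons W C, ?_, ?_, ?_, hker, ?_, ?_⟩
      · rw [stmt14_iSup_cons, ← sup_assoc, sup_comm W₀ W, sup_assoc, hsup, hsupWU']
      · intro i v hv w hw
        induction i using Fin.cases with
        | zero =>
          rw [Fin.cons_zero] at hw
          rw [real_inner_comm]
          exact hWU' w hw v (hW₀U' hv)
        | succ j =>
          rw [Fin.cons_succ] at hw
          exact horth₁ j v hv w hw
      · intro i j hij v hv w hw
        induction i using Fin.cases with
        | zero =>
          rw [Fin.cons_zero] at hv
          induction j using Fin.cases with
          | zero => exact absurd rfl hij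
          | succ j' =>
            rw [Fin.cons_succ] at hw
            exact hWU' v hv w (hCU' j' hw)
        | succ i' =>
          rw [Fin.cons_succ] at hv
          induction j using Fin.cases with
          | zero =>
            rw [Fin.cons_zero] at hw
            rw [real_inner_comm]
            exact hWU' w hw v (hCU' i' hv)
          | succ j' =>
            rw [Fin.cons_succ] at hw
            exact horth₂ i' j' (fun h => hij (by rw [h])) v hv w hw
      · intro T hT i v hv
        induction i using Fin.cases with
        | zero =>
          rw [Fin.cons_zero] at hv ⊢
          exact hWinv T hT v hv
        | succ j =>
          rw [Fin.cons_succ] at hv ⊢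
          exact hCinv T hT j v hv
      · intro i
        induction i using Fin.cases with
        | zero => rw [Fin.cons_zero]; exact hWrank
        | succ j => rw [Fin.cons_succ]; exact hCrank j


end Aux

/-- Let `(V, ⟪·,·⟫)` be a finite-dimensional real inner product space and
`S` a set of pairwise commuting skew-adjoint endomorphisms of `V`.  Then `V` decomposes as
a direct sum `V = V₀ ⊕ V₁ ⊕ ⋯ ⊕ V_s` of subspaces invariant under every `T ∈ S`, with
`T(V₀) = 0` for all `T ∈ S` and `dim V_i = 2` for `i = 1, …, s`. -/
theorem statement14
    {V : Type*} [NormedAddCommGroup V] [InnerProductSpace ℝ V] [FiniteDimensional ℝ V]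
    (S : Set (V →ₗ[ℝ] V))
    (hcomm : ∀ T ∈ S, ∀ T' ∈ S, T ∘ₗ T' = T' ∘ₗ T)
    (hskew : ∀ T ∈ S, ∀ u v : V, ⟪T u, v⟫ = -⟪u, T v⟫) :
    ∃ (s : ℕ) (W : Fin (s + 1) → Submodule ℝ V),
      iSupIndep W ∧ (⨆ i, W i) = ⊤ ∧
      (∀ T ∈ S, ∀ i, ∀ v ∈ W i, T v ∈ W i) ∧
      (∀ T ∈ S, ∀ v ∈ W 0, T v = 0) ∧
      (∀ i : Fin (s + 1), i ≠ 0 → Module.finrank ℝ (W i) = 2) := by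
  obtain ⟨W₀, m, C, hsup, horth₁, horth₂, hker, hCinv, hCrank⟩ :=
    stmt14_aux S hcomm hskew (Module.finrank ℝ (⊤ : Submodule ℝ V)) ⊤ le_rfl
      (fun T _ v _ => Submodule.mem_top)
  refine ⟨m, Fin.cons W₀ C, ?_, ?_, ?_, ?_, ?_⟩
  · -- independence from pairwise orthogonality
    have hpair : ∀ i j : Fin (m + 1), i ≠ j →
        ∀ v ∈ (Fin.cons W₀ C : Fin (m + 1) → Submodule ℝ V) i,
        ∀ w ∈ (Fin.cons W₀ C : Fin (m + 1) → Submodule ℝ V) j, ⟪v, w⟫ = 0 := by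
      intro i j hij v hv w hw
      induction i using Fin.cases with
      | zero =>
        rw [Fin.cons_zero] at hv
        induction j using Fin.cases with
        | zero => exact absurd rfl hij
        | succ j' =>
          rw [Fin.cons_succ] at hw
          exact horth₁ j' v hv w hw
      | succ i' =>
        rw [Fin.cons_succ] at hv
        induction j using Fin.cases with
        | zero =>
          rw [Fin.cons_zero] at hw
          rw [real_inner_comm]
          exact horth₁ i' w hw v hv
        | succ j' =>
          rw [Fin.cons_succ] at hw
          exact horth₂ i' j' (fun h => hij (by rw [h])) v hv w hw
    intro i
    set D : Fin (m + 1) → Submodule ℝ V := Fin.cons W₀ C with hD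
    have hle : (⨆ j, ⨆ (_ : j ≠ i), D j) ≤ (D i)ᗮ := by
      refine iSup_le fun j => iSup_le fun hj => ?_
      intro w hw
      rw [Submodule.mem_orthogonal]
      intro u hu
      exact hpair i j (fun h => hj (h.symm)) u hu w hw
    exact (Submodule.orthogonal_disjoint (D i)).mono_right hle
  · rw [stmt14_iSup_cons, hsup]
  · intro T hT i v hv
    induction i using Fin.cases with
    | zero =>
      rw [Fin.cons_zero] at hv ⊢
      rw [hker T hT v hv]
      exact W₀.zero_mem
    | succ j =>
      rw [Fin.cons_succ] at hv ⊢
      exact hCinv T hT j v hv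
  · intro T hT v hv
    rw [Fin.cons_zero] at hv
    exact hker T hT v hv
  · intro i hi
    obtain ⟨j, rfl⟩ := Fin.eq_succ_of_ne_zero hi
    rw [Fin.cons_succ]
    exact hCrank j
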